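/- Let D be a finite directed graph and D' its reduced undirected graph. If every vertex of D is incident to at most Δ arcs (counting both incoming and outgoing arcs), then every vertex of D' has degree at most max(Δ + 1, 4); in particular, if Δ ≤ 3 then D' has maximum degree at most 4. Moreover, if the underlying undirected graph of D is bipartite (2-colorable), then D' is bipartite. -/

import Mathlib

noncomputable def mex (s : Finset ℕ) : ℕ := sInf {n : ℕ | n ∉ s}

noncomputable def geo {V : Type} [DecidableEq V] (G : SimpleGraph V) [DecidableRel G.Adj]
    (A : Finset V) (s : V) : ℕ :=
  if h : s ∈ A then
    mex (((A.erase s).filter (fun v => G.Adj s v)).image (fun v => geo G (A.erase s) v))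
  else 0
termination_by A.card
decreasing_by
  simp_wf
  exact Finset.card_erase_lt_of_mem h

/-- Vertices of the reduced undirected graph `D'` of a directed graph `D` on `V`:
original vertices (`orig`), one pendant vertex per original vertex (`pend`), and for
each arc `e` the eight gadget vertices `a, a₀, b, c, c₀, d, d₀, f`, encoded as
`gad e 0, …, gad e 7` in that order. -/
abbrev RedV (V : Type) : Type := V ⊕ V ⊕ ((V × V) × Fin 8)

def orig {V : Type} (v : V) : RedV V := Sum.inl v
def pend {V : Type} (v : V) : RedV V := Sum.inr (Sum.inl v)
def gad {V : Type} (e : V × V) (i : Fin 8) : RedV V := Sum.inr (Sum.inr (e, i))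

/-- The internal edges of the gadget for one arc, with the names
`a = 0, a₀ = 1, b = 2, c = 3, c₀ = 4, d = 5, d₀ = 6, f = 7`:
`{a,a₀}, {a,b}, {b,c}, {c,c₀}, {b,f}, {c,d}, {d,d₀}, {f,d}`. -/
def gadgetPairs : List (Fin 8 × Fin 8) :=
  [(0,1), (0,2), (2,3), (3,4), (2,7), (3,5), (5,6), (7,5)]

/-- Base edge relation of the reduced graph `D'` of the digraph with arc set `A`:
each vertex `v` gets a pendant edge `{v, v₀}`, and each arc `(x,y) ∈ A` is replaced
by its gadget, with edges `{x,a}` and `{d,y}` to the original vertices and the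
internal gadget edges. -/
def redRel {V : Type} [DecidableEq V] (A : Finset (V × V)) : RedV V → RedV V → Prop
  | Sum.inl v, Sum.inr (Sum.inl w) => v = w
  | Sum.inl v, Sum.inr (Sum.inr (e, i)) =>
      e ∈ A ∧ ((v = e.1 ∧ i = 0) ∨ (v = e.2 ∧ i = 5))
  | Sum.inr (Sum.inr (e, i)), Sum.inr (Sum.inr (e', j)) =>
      e = e' ∧ e ∈ A ∧ (i, j) ∈ gadgetPairs
  | _, _ => False

instance {V : Type} [DecidableEq V] (A : Finset (V × V)) : DecidableRel (redRel A) :=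
  fun u w => by
    rcases u with v | v | ⟨e, i⟩ <;> rcases w with v' | v' | ⟨e', j⟩ <;>
      simp only [redRel] <;> infer_instance

/-- The reduced undirected graph `D'` of the digraph with vertex type `V` and
arc set `A`. -/
def reduced {V : Type} [DecidableEq V] (A : Finset (V × V)) : SimpleGraph (RedV V) where
  Adj u w := u ≠ w ∧ (redRel A u w ∨ redRel A w u)
  symm := ⟨fun u w h => ⟨h.1.symm, h.2.symm⟩⟩
  loopless := ⟨fun u h => h.1 rfl⟩

instance {V : Type} [DecidableEq V] (A : Finset (V × V)) : DecidableRel (reduced A).Adj :=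
  fun u w => inferInstanceAs (Decidable (u ≠ w ∧ (redRel A u w ∨ redRel A w u)))


/-- Internal degree of gadget vertex `i`. -/
def gdeg (i : Fin 8) : ℕ :=
  (Finset.univ.filter (fun j : Fin 8 => (i, j) ∈ gadgetPairs ∨ (j, i) ∈ gadgetPairs)).card

lemma gdeg_bound : ∀ i : Fin 8, (if i = 0 ∨ i = 5 then 1 else 0) + gdeg i ≤ 4 := by decide

/-- Coloring of gadget vertex `i` given the color `t` of the tail of the arc. -/
def gcol (i : Fin 8) (t : Bool) : Bool :=
  if i = 1 ∨ i = 2 ∨ i = 4 ∨ i = 5 then t else !t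

lemma gcol_pairs : ∀ p ∈ gadgetPairs, ∀ t : Bool, gcol p.1 t ≠ gcol p.2 t := by decide

lemma redRel_to_inl {V : Type} [DecidableEq V] (A : Finset (V × V)) (w : RedV V) (v : V) :
    ¬ redRel A w (Sum.inl v) := by
  rcases w with w | w | ⟨e, i⟩ <;> simp [redRel]

lemma redRel_from_pend {V : Type} [DecidableEq V] (A : Finset (V × V)) (w : RedV V) (v : V) :
    ¬ redRel A (Sum.inr (Sum.inl v)) w := by
  rcases w with w | w | ⟨e, i⟩ <;> simp [redRel]

/-- if every vertex of the digraph `D` (with arc set `A`) is incident to at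
most `Δ` arcs, counting both incoming and outgoing arcs, then every vertex of the reduced
undirected graph `D'` has degree at most `max (Δ + 1) 4`; in particular, if `Δ ≤ 3` then
`D'` has maximum degree at most `4`.  Moreover, if the underlying undirected graph of `D`
is bipartite (its vertices can be 2-colored so that the endpoints of every arc receive
different colors), then `D'` is bipartite. -/
theorem stmt16 {V : Type} [Fintype V] [DecidableEq V] (A : Finset (V × V)) (Δ : ℕ)
    (hΔ : ∀ v : V,
      (A.filter (fun e => e.1 = v)).card + (A.filter (fun e => e.2 = v)).card ≤ Δ) :
    (∀ u : RedV V, (reduced A).degree u ≤ max (Δ + 1) 4) ∧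
    (Δ ≤ 3 → ∀ u : RedV V, (reduced A).degree u ≤ 4) ∧
    ((∃ c : V → Bool, ∀ x y : V, ((x, y) ∈ A ∨ (y, x) ∈ A) → c x ≠ c y) →
      ∃ c : RedV V → Bool, ∀ u w : RedV V, (reduced A).Adj u w → c u ≠ c w) := by
  have hdeg : ∀ u : RedV V, (reduced A).degree u ≤ max (Δ + 1) 4 := by
    intro u
    rw [← SimpleGraph.card_neighborFinset_eq_degree]
    rcases u with v | v | ⟨e, i⟩
    · -- original vertex
      have hsub : (reduced A).neighborFinset (Sum.inl v) ⊆
          insert (pend v) (((A.filter (fun e => e.1 = v)).image (fun e => gad e 0)) ∪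
            ((A.filter (fun e => e.2 = v)).image (fun e => gad e 5))) := by
        intro w hw
        rw [SimpleGraph.mem_neighborFinset] at hw
        obtain ⟨hne, h | h⟩ := hw
        · rcases w with w | w | ⟨e, i⟩
          · simp [redRel] at h
          · simp only [redRel] at h
            subst h
            exact Finset.mem_insert_self _ _
          · simp only [redRel] at h
            obtain ⟨he, ⟨hv, hi⟩ | ⟨hv, hi⟩⟩ := h
            · subst hi
              exact Finset.mem_insert_of_mem <| Finset.mem_union_left _ <|
                Finset.mem_image.2 ⟨e, Finset.mem_filter.2 ⟨he, hv.symm⟩, rfl⟩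
            · subst hi
              exact Finset.mem_insert_of_mem <| Finset.mem_union_right _ <|
                Finset.mem_image.2 ⟨e, Finset.mem_filter.2 ⟨he, hv.symm⟩, rfl⟩
        · exact absurd h (redRel_to_inl A w v)
      calc ((reduced A).neighborFinset (Sum.inl v)).card
          ≤ _ := Finset.card_le_card hsub
        _ ≤ 1 + (((A.filter (fun e => e.1 = v)).image (fun e => gad e 0)) ∪
            ((A.filter (fun e => e.2 = v)).image (fun e => gad e 5))).card := by
            rw [Nat.add_comm]; exact Finset.card_insert_le _ _
        _ ≤ 1 + (((A.filter (fun e => e.1 = v)).image (fun e => gad e 0)).card +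
            ((A.filter (fun e => e.2 = v)).image (fun e => gad e 5)).card) := by
            exact Nat.add_le_add_left (Finset.card_union_le _ _) 1
        _ ≤ 1 + ((A.filter (fun e => e.1 = v)).card + (A.filter (fun e => e.2 = v)).card) :=
            Nat.add_le_add_left (Nat.add_le_add (Finset.card_image_le) (Finset.card_image_le)) 1
        _ ≤ 1 + Δ := Nat.add_le_add_left (hΔ v) 1
        _ ≤ max (Δ + 1) 4 := by omega
    · -- pendant vertex
      have hsub : (reduced A).neighborFinset (Sum.inr (Sum.inl v)) ⊆ {Sum.inl v} := by
        intro w hw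
        rw [SimpleGraph.mem_neighborFinset] at hw
        obtain ⟨hne, h | h⟩ := hw
        · exact absurd h (redRel_from_pend A w v)
        · rcases w with w | w | ⟨e, i⟩
          · simp only [redRel] at h
            subst h
            exact Finset.mem_singleton_self _
          · simp [redRel] at h
          · simp [redRel] at h
      calc ((reduced A).neighborFinset (Sum.inr (Sum.inl v))).card
          ≤ ({Sum.inl v} : Finset (RedV V)).card := Finset.card_le_card hsub
        _ = 1 := Finset.card_singleton _
        _ ≤ max (Δ + 1) 4 := le_trans (by norm_num) (le_max_right _ _)
    · -- gadget vertex
      have hsub : (reduced A).neighborFinset (gad e i) ⊆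
          (if i = 0 then ({orig e.1} : Finset (RedV V))
            else if i = 5 then ({orig e.2} : Finset (RedV V)) else ∅) ∪
          (Finset.univ.filter
            (fun j : Fin 8 => (i, j) ∈ gadgetPairs ∨ (j, i) ∈ gadgetPairs)).image (gad e) := by
        intro w hw
        rw [SimpleGraph.mem_neighborFinset] at hw
        obtain ⟨hne, h | h⟩ := hw
        · rcases w with w | w | ⟨e', j⟩
          · simp [gad, redRel] at h
          · simp [gad, redRel] at h
          · simp only [gad, redRel] at h
            obtain ⟨heq, he, hp⟩ := h
            subst heq
            exact Finset.mem_union_right _ <| Finset.mem_image.2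
              ⟨j, Finset.mem_filter.2 ⟨Finset.mem_univ _, Or.inl hp⟩, rfl⟩
        · rcases w with w | w | ⟨e', j⟩
          · simp only [gad, redRel] at h
            obtain ⟨he, ⟨hv, hi⟩ | ⟨hv, hi⟩⟩ := h
            · subst hi; subst hv
              exact Finset.mem_union_left _ (by simp [orig])
            · subst hi; subst hv
              refine Finset.mem_union_left _ ?_
              have h5 : (5 : Fin 8) ≠ 0 := by decide
              simp [orig, h5]
          · simp [gad, redRel] at h
          · simp only [gad, redRel] at h
            obtain ⟨heq, he, hp⟩ := h
            subst heq
            exact Finset.mem_union_right _ <| Finset.mem_image.2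
              ⟨j, Finset.mem_filter.2 ⟨Finset.mem_univ _, Or.inr hp⟩, rfl⟩
      have h4 : ((reduced A).neighborFinset (gad e i)).card ≤ 4 := by
        calc ((reduced A).neighborFinset (gad e i)).card
            ≤ _ := Finset.card_le_card hsub
          _ ≤ (if i = 0 then ({orig e.1} : Finset (RedV V))
              else if i = 5 then ({orig e.2} : Finset (RedV V)) else ∅).card +
              ((Finset.univ.filter
                (fun j : Fin 8 => (i, j) ∈ gadgetPairs ∨ (j, i) ∈ gadgetPairs)).image
                (gad e)).card := Finset.card_union_le _ _
          _ ≤ (if i = 0 ∨ i = 5 then 1 else 0) + gdeg i := by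
              gcongr
              · split_ifs <;> simp_all
              · exact Finset.card_image_le
          _ ≤ 4 := gdeg_bound i
      exact le_trans h4 (le_max_right _ _)
  refine ⟨hdeg, fun h3 u => le_trans (hdeg u) (by omega), ?_⟩
  rintro ⟨c, hc⟩
  refine ⟨fun u => match u with
    | Sum.inl v => c v
    | Sum.inr (Sum.inl v) => !(c v)
    | Sum.inr (Sum.inr (e, i)) => gcol i (c e.1), ?_⟩
  have key : ∀ u w : RedV V, redRel A u w →
      (fun u : RedV V => match u with
        | Sum.inl v => c v
        | Sum.inr (Sum.inl v) => !(c v)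
        | Sum.inr (Sum.inr (e, i)) => gcol i (c e.1)) u ≠
      (fun u : RedV V => match u with
        | Sum.inl v => c v
        | Sum.inr (Sum.inl v) => !(c v)
        | Sum.inr (Sum.inr (e, i)) => gcol i (c e.1)) w := by
    intro u w h
    rcases u with v | v | ⟨e, i⟩ <;> rcases w with v' | v' | ⟨e', j⟩ <;>
      simp only [redRel] at h
    · subst h; simp
    · obtain ⟨he, ⟨hv, hi⟩ | ⟨hv, hi⟩⟩ := h
      · subst hi; subst hv; simp [gcol]
      · subst hi; subst hv
        simp only [gcol]
        have := hc e'.1 e'.2 (Or.inl (by simpa using he))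
        simpa using fun hh => this hh.symm
    · obtain ⟨heq, he, hp⟩ := h
      subst heq
      exact gcol_pairs (i, j) hp (c e.1)
  intro u w hw
  obtain ⟨hne, h | h⟩ := hw
  · exact key u w h
  · exact (key w u h).symm
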